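/- Let (U, U^ι) be a quantum symmetric pair of finite type, (M, B^ι) a based U^ι-module and (N, B) a finite-dimensional based U-module. The set B^ι ◇_ι B := { b₁ ◇_ι b₂ | b₁ ∈ B^ι, b₂ ∈ B } forms a ℚ(q)-basis for M ⊗ N, a ℤ[q,q^{-1}]-basis for the tensor product of the integral forms _A M ⊗_A _A N, and a ℤ[q^{-1}]-basis for the lattice 𝓛(M) ⊗_{ℤ[q^{-1}]} 𝓛(N) (the ι-canonical basis of M ⊗ N). -/

import Mathlib

/-!
Statement 2 (Bao–Wang–Watanabe, Theorem 1(3)).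

The set `B^ι ◇_ι B = {{ b₁ ◇_ι b₂ | b₁ ∈ B^ι, b₂ ∈ B }}` forms a `ℚ(q)`-basis of `M ⊗ N`,
a `ℤ[q,q⁻¹]`-basis of `_𝒜M ⊗_𝒜 _𝒜N`, and a `ℤ[q⁻¹]`-basis of `𝓛(M) ⊗ 𝓛(N)`
(the ι-canonical basis of `M ⊗ N`).

Membership in the integral form `_𝒜M ⊗_𝒜 _𝒜N` (resp. in the lattice
`𝓛(M) ⊗ 𝓛(N)`) is expressed by saying that all coordinates with respect to the
standard basis `B^ι ⊗ B` lie in `ℤ[q,q⁻¹]` (resp. `ℤ[q⁻¹]`); being a basis over the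
corresponding coefficient ring is expressed by the corresponding expansion property.
The modelling conventions are as in Statement 0.
-/

open scoped TensorProduct

noncomputable section

/-- The base field `ℚ(q)`. -/
abbrev Fq : Type := RatFunc ℚ

/-- The variable `q ∈ ℚ(q)`. -/
def qq : Fq := RatFunc.X

/-- The subring `ℤ[q⁻¹] ⊆ ℚ(q)`. -/
def ZqInv : Subring Fq := Subring.closure {qq⁻¹}

/-- The set `q⁻¹ ℤ[q⁻¹] ⊆ ℚ(q)`. -/
def qInvZqInv : Set Fq := {x | ∃ y ∈ ZqInv, x = qq⁻¹ * y}

/-- The subring `ℤ[q, q⁻¹] ⊆ ℚ(q)`. -/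
def LaurentZ : Subring Fq := Subring.closure {qq, qq⁻¹}

lemma qq_ne_zero : qq ≠ 0 := RatFunc.X_ne_zero
lemma qq_inv_ne_zero : (qq⁻¹ : Fq) ≠ 0 := inv_ne_zero qq_ne_zero

lemma intDegree_qq : (qq : Fq).intDegree = 1 := RatFunc.intDegree_X

lemma intDegree_qq_inv : (qq⁻¹ : Fq).intDegree = -1 := by
  have h := RatFunc.intDegree_mul qq_ne_zero qq_inv_ne_zero
  rw [mul_inv_cancel₀ qq_ne_zero, RatFunc.intDegree_one, intDegree_qq] at h
  omega

lemma ZqInv_deg : ∀ x ∈ ZqInv, x = 0 ∨ x.intDegree ≤ 0 := by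
  intro x hx
  induction hx using Subring.closure_induction with
  | mem x h => rcases h with rfl; right; rw [intDegree_qq_inv]; omega
  | one => right; rw [RatFunc.intDegree_one]
  | zero => left; rfl
  | add x y hx hy ihx ihy =>
    rcases ihx with rfl | hx0
    · simpa using ihy
    rcases ihy with rfl | hy0
    · simp [hx0]
    by_cases hxy : x + y = 0
    · left; exact hxy
    · right
      by_cases hy' : y = 0
      · simp [hy', hx0]
      · exact le_trans (RatFunc.intDegree_add_le hy' hxy) (by omega)
  | neg x hx ihx =>
    rcases ihx with rfl | h
    · simp
    · right; rwa [RatFunc.intDegree_neg]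
  | mul x y hx hy ihx ihy =>
    rcases ihx with rfl | hx0
    · simp
    rcases ihy with rfl | hy0
    · simp
    by_cases hx' : x = 0
    · simp [hx']
    by_cases hy' : y = 0
    · simp [hy']
    right; rw [RatFunc.intDegree_mul hx' hy']; omega

def Zq : Subring Fq := Subring.closure {qq}

lemma Zq_deg : ∀ x ∈ Zq, x = 0 ∨ 0 ≤ x.intDegree := by
  intro x hx
  have hle : Zq ≤ (algebraMap (Polynomial ℚ) Fq).range := by
    apply Subring.closure_le.mpr
    intro y hy
    rcases hy with rfl
    exact ⟨Polynomial.X, by rw [RatFunc.algebraMap_X]; rfl⟩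
  obtain ⟨p, rfl⟩ := hle hx
  by_cases hp : p = 0
  · left; simp [hp]
  · right; rw [RatFunc.intDegree_polynomial]; positivity

lemma qinv_mem : (qq⁻¹ : Fq) ∈ ZqInv := Subring.subset_closure rfl

lemma ZqInv_le_LaurentZ : ZqInv ≤ LaurentZ :=
  Subring.closure_mono (by intro x hx; rcases hx with rfl; right; rfl)

section Bar
variable (bar : Fq ≃+* Fq)

lemma bar_qq_inv (hbarq : bar qq = qq⁻¹) : bar qq⁻¹ = qq := by
  rw [map_inv₀ bar qq, hbarq, inv_inv]

lemma bar_ZqInv (hbarq : bar qq = qq⁻¹) : ∀ x ∈ ZqInv, bar x ∈ Zq := by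
  intro x hx
  induction hx using Subring.closure_induction with
  | mem x h => rcases h with rfl; rw [bar_qq_inv bar hbarq]; exact Subring.subset_closure rfl
  | one => rw [map_one]; exact one_mem _
  | zero => rw [map_zero]; exact zero_mem _
  | add x y hx hy ihx ihy => rw [map_add]; exact add_mem ihx ihy
  | neg x hx ihx => rw [map_neg]; exact neg_mem ihx
  | mul x y hx hy ihx ihy => rw [map_mul]; exact mul_mem ihx ihy

lemma bar_LaurentZ (hbarq : bar qq = qq⁻¹) : ∀ x ∈ LaurentZ, bar x ∈ LaurentZ := by
  intro x hx
  induction hx using Subring.closure_induction with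
  | mem x h =>
    rcases h with rfl | rfl
    · rw [hbarq]; exact Subring.subset_closure (by right; rfl)
    · rw [bar_qq_inv bar hbarq]; exact Subring.subset_closure (by left; rfl)
  | one => rw [map_one]; exact one_mem _
  | zero => rw [map_zero]; exact zero_mem _
  | add x y hx hy ihx ihy => rw [map_add]; exact add_mem ihx ihy
  | neg x hx ihx => rw [map_neg]; exact neg_mem ihx
  | mul x y hx hy ihx ihy => rw [map_mul]; exact mul_mem ihx ihy

lemma d_eq_one (hbarq : bar qq = qq⁻¹) (d : Fq) (hd : ∃ z ∈ ZqInv, d - 1 = qq⁻¹ * z) (hbar : bar d = d) : d = 1 := by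
  obtain ⟨z, hz, heq⟩ := hd
  rcases eq_or_ne z 0 with rfl | hz0
  · rw [mul_zero, sub_eq_zero] at heq; exact heq
  · exfalso
    have hbar' : bar (d - 1) = d - 1 := by rw [map_sub, map_one, hbar]
    have hqz : qq⁻¹ * z = qq * bar z := by
      conv_lhs => rw [← heq, ← hbar', heq]
      rw [map_mul, bar_qq_inv bar hbarq]
    have hw : bar z ∈ Zq := bar_ZqInv bar hbarq z hz
    have hw0 : bar z ≠ 0 := fun h => hz0 (by simpa [h] using bar.injective (a₁ := z) (a₂ := 0) (by simp [h]))
    have h1 : (qq⁻¹ * z).intDegree ≤ -1 := by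
      rw [RatFunc.intDegree_mul qq_inv_ne_zero hz0, intDegree_qq_inv]
      rcases ZqInv_deg z hz with rfl | h
      · exact absurd rfl hz0
      · omega
    have h2 : 1 ≤ (qq * bar z).intDegree := by
      rw [RatFunc.intDegree_mul qq_ne_zero hw0, intDegree_qq]
      rcases Zq_deg _ hw with h | h
      · exact absurd h hw0
      · omega
    rw [hqz] at h1; omega

end Bar

lemma det_one_mod {P : Type} [Fintype P] [DecidableEq P]
    (B : Matrix P P ZqInv)
    (h : ∀ p p', ∃ z : ZqInv, B p p' - (1 : Matrix P P ZqInv) p p' = ⟨qq⁻¹, qinv_mem⟩ * z) :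
    ∃ z : ZqInv, B.det - 1 = ⟨qq⁻¹, qinv_mem⟩ * z := by
  set t : ZqInv := ⟨qq⁻¹, qinv_mem⟩ with ht
  have hmap : (Ideal.Quotient.mk (Ideal.span {t})).mapMatrix B
      = (Ideal.Quotient.mk (Ideal.span {t})).mapMatrix 1 := by
    ext p p'
    simp only [RingHom.mapMatrix_apply, Matrix.map_apply]
    rw [Ideal.Quotient.mk_eq_mk_iff_sub_mem]
    obtain ⟨z, hz⟩ := h p p'
    rw [hz]
    exact Ideal.mem_span_singleton.mpr ⟨z, rfl⟩
  have hdet : Ideal.Quotient.mk (Ideal.span {t}) B.det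
      = Ideal.Quotient.mk (Ideal.span {t}) 1 := by
    rw [RingHom.map_det, hmap, ← RingHom.map_det, Matrix.det_one]
  rw [Ideal.Quotient.mk_eq_mk_iff_sub_mem] at hdet
  exact Ideal.mem_span_singleton.mp hdet

lemma det_eq_one_of_increasing {P : Type} [Fintype P] [DecidableEq P]
    (R : Matrix P P Fq) (g : P → ℤ)
    (hdiag : ∀ p, R p p = 1)
    (hoff : ∀ p p', p ≠ p' → R p p' ≠ 0 → g p < g p') : R.det = 1 := by
  have hbt : R.BlockTriangular g := by
    intro p p' h
    by_contra hne0
    rcases eq_or_ne p p' with rfl | hne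
    · exact lt_irrefl _ h
    · exact absurd (hoff p p' hne hne0) (by omega)
  rw [Matrix.BlockTriangular.det hbt]
  apply Finset.prod_eq_one
  intro k _
  have h1 : R.toSquareBlock g k = 1 := by
    ext i j
    rcases eq_or_ne i j with rfl | hij
    · simp [Matrix.toSquareBlock_def, hdiag, Matrix.one_apply]
    · have hij' : (i : P) ≠ (j : P) := fun h => hij (Subtype.ext h)
      have : R i j = 0 := by
        by_contra hne0
        have := hoff i j hij' hne0
        rw [i.2, j.2] at this
        exact lt_irrefl _ this
      simp [Matrix.toSquareBlock_def, this, Matrix.one_apply, Subtype.ext_iff, hij']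
  rw [h1, Matrix.det_one]
/-- The partial order on the weight lattice `X`: `μ' < μ` iff `μ' - μ ∈ ℕ𝕀` is nonzero. -/
def wtLT {I : Type} (μ' μ : I →₀ ℤ) : Prop := (∀ i, μ i ≤ μ' i) ∧ μ' ≠ μ

theorem statement_2
    -- the weight lattice `X = ℤ𝕀` of the root datum `(𝕀, ·)` of finite type
    (I : Type) [Fintype I]
    -- a based `U^ι`-module `(M, B^ι)` and a finite-dimensional based `U`-module `(N, B)`
    (ιM ιN : Type) [Finite ιM] [Finite ιN]
    (M N : Type) [AddCommGroup M] [Module Fq M] [AddCommGroup N] [Module Fq N]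
    (bM : Module.Basis ιM Fq M) (bN : Module.Basis ιN Fq N)
    -- the bar involution of `ℚ(q)`, `q ↦ q⁻¹`
    (bar : Fq ≃+* Fq) (hbarq : bar qq = qq⁻¹) (hbar_invol : ∀ x, bar (bar x) = x)
    -- the `U`-weights of the members of the basis `B` of `N`
    (wtN : ιN → I →₀ ℤ)
    -- the bar involution `ψ_ι` of `M`, fixing `B^ι`
    (ψM : M → M) (hψM_add : ∀ x y, ψM (x + y) = ψM x + ψM y)
    (hψM_smul : ∀ (c : Fq) (x : M), ψM (c • x) = bar c • ψM x)
    (hψM_fix : ∀ i, ψM (bM i) = bM i)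
    -- the bar involution `ψ` of `N`, fixing `B`
    (ψN : N → N) (hψN_add : ∀ x y, ψN (x + y) = ψN x + ψN y)
    (hψN_smul : ∀ (c : Fq) (x : N), ψN (c • x) = bar c • ψN x)
    (hψN_fix : ∀ j, ψN (bN j) = bN j)
    -- the map `ψ_ι ⊗ ψ` on `M ⊗ N`
    (ψMN : M ⊗[Fq] N → M ⊗[Fq] N)
    (hψMN_add : ∀ x y, ψMN (x + y) = ψMN x + ψMN y)
    (hψMN : ∀ (m : M) (n : N), ψMN (m ⊗ₜ[Fq] n) = ψM m ⊗ₜ[Fq] ψN n)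
    -- the action on `M ⊗ N` of the components `Θ^ι_μ ∈ U^ι ⊗ U⁺_μ` of
    -- `Θ^ι = Δ(Υ)·Θ·(Υ⁻¹ ⊗ id)`
    (Θi : (I →₀ ℤ) → (M ⊗[Fq] N →ₗ[Fq] M ⊗[Fq] N))
    (hΘi_zero : Θi 0 = LinearMap.id)
    (hΘi_pos : ∀ μ : I →₀ ℤ, (¬ ∀ i, 0 ≤ μ i) → Θi μ = 0)
    -- `Θ^ι_μ ∈ U^ι ⊗ U⁺_μ`: it raises the `N`-weight exactly by `μ`
    (hΘi_wt : ∀ μ : I →₀ ℤ, μ ≠ 0 → ∀ (i : ιM) (j : ιN),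
      Θi μ (bM i ⊗ₜ[Fq] bN j) ∈ Submodule.span Fq
        {z : M ⊗[Fq] N | ∃ i' j', wtN j' = wtN j + μ ∧ z = bM i' ⊗ₜ[Fq] bN j'})
    -- integrality of `Θ^ι_μ`
    (hΘi_int : ∀ (μ : I →₀ ℤ) (i : ιM) (j : ιN) (p : ιM × ιN),
      (bM.tensorProduct bN).repr (Θi μ (bM i ⊗ₜ[Fq] bN j)) p ∈ LaurentZ)
    (hΘi_fin : ∀ x : M ⊗[Fq] N, {μ : I →₀ ℤ | Θi μ x ≠ 0}.Finite)
    -- the new bar involution `ψ_ι := Θ^ι ∘ (ψ_ι ⊗ ψ)` on `M ⊗ N`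
    (Ψ : M ⊗[Fq] N → M ⊗[Fq] N)
    (hΨ : ∀ x, Ψ x = ∑ᶠ μ : I →₀ ℤ, Θi μ (ψMN x))
    (hΨ_invol : ∀ x, Ψ (Ψ x) = x)
    -- the family `b₁ ◇_ι b₂`: `ψ_ι`-invariant and congruent to `b₁ ⊗ b₂`
    -- modulo `q⁻¹ℤ[q⁻¹]·(B^ι ⊗ B)`
    (cb : ιM × ιN → M ⊗[Fq] N)
    (hcb_inv : ∀ p, Ψ (cb p) = cb p)
    (hcb_congr : ∀ p p' : ιM × ιN,
      (bM.tensorProduct bN).repr (cb p - bM p.1 ⊗ₜ[Fq] bN p.2) p' ∈ qInvZqInv) :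
    -- a `ℚ(q)`-basis of `M ⊗ N`
    (LinearIndependent Fq cb ∧ Submodule.span Fq (Set.range cb) = ⊤) ∧
    -- a `ℤ[q,q⁻¹]`-basis of `_𝒜M ⊗_𝒜 _𝒜N`
    (∀ x : M ⊗[Fq] N,
      (∀ p, (bM.tensorProduct bN).repr x p ∈ LaurentZ) ↔
      ∃ c : ιM × ιN →₀ Fq, (∀ p, c p ∈ LaurentZ) ∧ x = c.sum fun p a => a • cb p) ∧
    -- a `ℤ[q⁻¹]`-basis of `𝓛(M) ⊗ 𝓛(N)`
    (∀ x : M ⊗[Fq] N,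
      (∀ p, (bM.tensorProduct bN).repr x p ∈ ZqInv) ↔
      ∃ c : ιM × ιN →₀ Fq, (∀ p, c p ∈ ZqInv) ∧ x = c.sum fun p a => a • cb p) := by
  classical
  have : Fintype ιM := Fintype.ofFinite _
  have : Fintype ιN := Fintype.ofFinite _
  set bP : Module.Basis (ιM × ιN) Fq (M ⊗[Fq] N) := bM.tensorProduct bN with hbPdef
  have hbP : ∀ p : ιM × ιN, bP p = bM p.1 ⊗ₜ[Fq] bN p.2 := fun p =>
    Module.Basis.tensorProduct_apply' bM bN p
  -- coordinate functionals
  set φ : (ιM × ιN) → (M ⊗[Fq] N →ₗ[Fq] Fq) :=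
    fun p => (Finsupp.lapply p) ∘ₗ (bP.repr : M ⊗[Fq] N →ₗ[Fq] ((ιM × ιN) →₀ Fq)) with hφdef
  have hφ : ∀ p x, φ p x = bP.repr x p := fun p x => rfl
  -- basic properties of ψMN and Ψ
  have ψMN_zero : ψMN 0 = 0 := by
    have h := hψMN_add 0 0
    rw [add_zero] at h
    exact left_eq_add.mp h
  have ψMN_smul : ∀ (c : Fq) (x : M ⊗[Fq] N), ψMN (c • x) = bar c • ψMN x := by
    intro c x
    induction x using TensorProduct.induction_on with
    | zero => rw [smul_zero, ψMN_zero, smul_zero]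
    | tmul m n =>
      rw [TensorProduct.smul_tmul', hψMN, hψM_smul, ← TensorProduct.smul_tmul', hψMN]
    | add x y ihx ihy =>
      rw [smul_add, hψMN_add, ihx, ihy, hψMN_add, smul_add]
  have ψMN_bP : ∀ p, ψMN (bP p) = bP p := by
    intro p
    rw [hbP, hψMN, hψM_fix, hψN_fix]
  have hsupp : ∀ x : M ⊗[Fq] N, (Function.support fun μ => Θi μ x).Finite := fun x => hΘi_fin x
  have hΨadd : ∀ x y, Ψ (x + y) = Ψ x + Ψ y := by
    intro x y
    rw [hΨ, hΨ, hΨ, hψMN_add]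
    rw [← finsum_add_distrib (hsupp (ψMN x)) (hsupp (ψMN y))]
    exact finsum_congr fun μ => map_add _ _ _
  have hΨ0 : Ψ 0 = 0 := by
    have h := hΨadd 0 0
    rw [add_zero] at h
    exact left_eq_add.mp h
  have hΨsmul : ∀ (c : Fq) (x : M ⊗[Fq] N), Ψ (c • x) = bar c • Ψ x := by
    intro c x
    rw [hΨ, hΨ, ψMN_smul, smul_finsum' (bar c) (hsupp (ψMN x))]
    exact finsum_congr fun μ => map_smul (Θi μ) (bar c) (ψMN x)
  -- the matrix R of Ψ on the standard basis
  set R : Matrix (ιM × ιN) (ιM × ιN) Fq :=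
    Matrix.of fun p p' => bP.repr (Ψ (bP p)) p' with hRdef
  have hΨbP : ∀ p, Ψ (bP p) = ∑ᶠ μ, Θi μ (bP p) := by
    intro p; rw [hΨ, ψMN_bP]
  have hR_finsum : ∀ p p', R p p' = ∑ᶠ μ, bP.repr (Θi μ (bP p)) p' := by
    intro p p'
    have := (φ p').toAddMonoidHom.map_finsum (f := fun μ => Θi μ (bP p)) (hsupp (bP p))
    simpa [hφ, hRdef] using (hΨbP p ▸ this : φ p' (Ψ (bP p)) = _)
  have hR_mem : ∀ p p', R p p' ∈ LaurentZ := by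
    intro p p'
    rw [hR_finsum]
    rw [finsum_eq_sum _ ((hsupp (bP p)).subset (by
      intro μ hμ
      simp only [Function.mem_support] at hμ ⊢
      intro h0; exact hμ (by rw [h0, map_zero]; rfl)))]
    apply Subring.sum_mem
    intro μ _
    have := hΘi_int μ p.1 p.2 p'
    rwa [← hbP] at this
  -- weight function
  set g : ιM × ιN → ℤ := fun p => ∑ i, wtN p.2 i with hgdef
  -- vanishing of coordinates of Θi μ on wrong weights
  have hwt0 : ∀ (μ : I →₀ ℤ), μ ≠ 0 → ∀ (p p' : ιM × ιN), wtN p'.2 ≠ wtN p.2 + μ →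
      bP.repr (Θi μ (bP p)) p' = 0 := by
    intro μ hμ p p' hwt
    have hspan := hΘi_wt μ hμ p.1 p.2
    rw [← hbP] at hspan
    have hle : Submodule.span Fq
        {z : M ⊗[Fq] N | ∃ i' j', wtN j' = wtN p.2 + μ ∧ z = bM i' ⊗ₜ[Fq] bN j'} ≤
        LinearMap.ker (φ p') := by
      rw [Submodule.span_le]
      rintro z ⟨i', j', hj', rfl⟩
      have hne : (i', j') ≠ p' := by
        rintro rfl
        exact hwt hj'
      simp only [SetLike.mem_coe, LinearMap.mem_ker, hφ, ← hbP ⟨i', j'⟩]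
      rw [bP.repr_self_apply]
      simp [hne]
    have := hle hspan
    rw [LinearMap.mem_ker] at this
    rw [← hφ]
    exact this
  have hRdiag : ∀ p, R p p = 1 := by
    intro p
    rw [hR_finsum]
    rw [finsum_eq_single _ 0 (by
      intro μ hμ
      apply hwt0 μ hμ p p
      intro h
      exact hμ (by simpa using h.symm))]
    rw [hΘi_zero]
    simp only [LinearMap.id_coe, id_eq]
    rw [bP.repr_self_apply]
    simp
  have hRoff : ∀ p p', p ≠ p' → R p p' ≠ 0 → g p < g p' := by
    intro p p' hne hR0
    by_contra hlt
    apply hR0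
    rw [hR_finsum]
    apply finsum_eq_zero_of_forall_eq_zero
    intro μ
    rcases eq_or_ne μ 0 with rfl | hμ
    · rw [hΘi_zero]
      simp only [LinearMap.id_coe, id_eq]
      rw [bP.repr_self_apply]
      simp [hne]
    · by_cases hpos : ∀ i, 0 ≤ μ i
      · apply hwt0 μ hμ p p'
        intro hwt
        apply hlt
        have hsum : g p' = g p + ∑ i, μ i := by
          rw [hgdef]
          simp only [hwt, Finsupp.add_apply]
          rw [Finset.sum_add_distrib]
        have hposs : 0 < ∑ i, μ i := by
          obtain ⟨i₀, hi₀⟩ := Finsupp.ne_iff.mp hμ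
          simp only [Finsupp.coe_zero, Pi.zero_apply] at hi₀
          exact Finset.sum_pos' (fun i _ => hpos i)
            ⟨i₀, Finset.mem_univ _, lt_of_le_of_ne (hpos i₀) (Ne.symm hi₀)⟩
        omega
      · rw [hΘi_pos μ hpos]
        simp
  have hdetR : R.det = 1 := det_eq_one_of_increasing R g hRdiag hRoff
  -- the matrix A of cb on the standard basis
  set A : Matrix (ιM × ιN) (ιM × ιN) Fq :=
    Matrix.of fun p p' => bP.repr (cb p) p' with hAdef
  have hAE : ∀ p p', ∃ z ∈ ZqInv, A p p' - (1 : Matrix (ιM × ιN) (ιM × ιN) Fq) p p' = qq⁻¹ * z := by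
    intro p p'
    obtain ⟨y, hy, heq⟩ := hcb_congr p p'
    refine ⟨y, hy, ?_⟩
    rw [← heq, ← hbP p, map_sub]
    simp only [Finsupp.coe_sub, Pi.sub_apply]
    congr 1
    rw [bP.repr_self_apply, Matrix.one_apply]
  have hA_mem : ∀ p p', A p p' ∈ ZqInv := by
    intro p p'
    obtain ⟨z, hz, heq⟩ := hAE p p'
    have : A p p' = (1 : Matrix (ιM × ιN) (ιM × ιN) Fq) p p' + qq⁻¹ * z := by
      rw [← heq]; ring
    rw [this, Matrix.one_apply]
    refine add_mem ?_ (mul_mem qinv_mem hz)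
    split <;> [exact one_mem _; exact zero_mem _]
  have hcb_sum : ∀ p, cb p = ∑ p', A p p' • bP p' := by
    intro p
    exact (bP.sum_repr (cb p)).symm
  -- invariance gives A = (bar A) * R
  have hAR : A = Matrix.of (fun p p' => bar (A p p')) * R := by
    ext p p''
    have hΨsum : ∀ (f : (ιM × ιN) → M ⊗[Fq] N), Ψ (∑ p', f p') = ∑ p', Ψ (f p') :=
      fun f => map_sum (AddMonoidHom.mk' Ψ hΨadd) f Finset.univ
    have h1 : cb p = ∑ p', bar (A p p') • Ψ (bP p') := by
      conv_lhs => rw [← hcb_inv p, hcb_sum p]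
      rw [hΨsum]
      exact Finset.sum_congr rfl fun p' _ => hΨsmul _ _
    have h2 : A p p'' = bP.repr (∑ p', bar (A p p') • Ψ (bP p')) p'' := by
      conv_lhs => rw [hAdef]
      simp only [Matrix.of_apply]
      rw [← h1]
    rw [h2, map_sum]
    simp only [Finsupp.coe_finset_sum, Finset.sum_apply, map_smul]
    rw [Matrix.mul_apply]
    exact Finset.sum_congr rfl fun p' _ => by
      simp only [Finsupp.coe_smul, Pi.smul_apply, smul_eq_mul, Matrix.of_apply]
      rfl
  have hdet_bar : bar A.det = A.det := by
    conv_rhs => rw [hAR]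
    rw [Matrix.det_mul, hdetR, mul_one]
    have : Matrix.of (fun p p' => bar (A p p')) = (bar : Fq →+* Fq).mapMatrix A := rfl
    rw [this, ← RingHom.map_det]
    rfl
  set Ahat : Matrix (ιM × ιN) (ιM × ιN) ZqInv :=
    Matrix.of (fun p p' => (⟨A p p', hA_mem p p'⟩ : ZqInv)) with hAhat
  have hsub : (ZqInv.subtype).mapMatrix Ahat = A := by
    ext p p'; rfl
  have hdet_mod : ∃ z ∈ ZqInv, A.det - 1 = qq⁻¹ * z := by
    obtain ⟨z, hz⟩ := det_one_mod Ahat (by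
      intro p p'
      obtain ⟨z, hz, heq⟩ := hAE p p'
      refine ⟨⟨z, hz⟩, ?_⟩
      apply Subtype.ext
      push_cast
      rw [← heq]
      congr 1
      by_cases h : p = p' <;> simp [Matrix.one_apply, h])
    refine ⟨(z : Fq), z.2, ?_⟩
    have hval : ((Ahat.det : ZqInv) : Fq) = A.det := by
      rw [← hsub, ← RingHom.map_det]; rfl
    rw [← hval]
    calc ((Ahat.det : ZqInv) : Fq) - 1 = ((Ahat.det - 1 : ZqInv) : Fq) := by push_cast; ring
      _ = (((⟨qq⁻¹, qinv_mem⟩ : ZqInv) * z : ZqInv) : Fq) := by rw [hz]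
      _ = qq⁻¹ * (z : Fq) := by push_cast; ring
  have hdetA : A.det = 1 := d_eq_one bar hbarq A.det hdet_mod hdet_bar
  set C : Matrix (ιM × ιN) (ιM × ιN) Fq := A.adjugate with hCdef
  have hCA : C * A = 1 := by rw [hCdef, Matrix.adjugate_mul, hdetA, one_smul]
  have hAC : A * C = 1 := by rw [hCdef, Matrix.mul_adjugate, hdetA, one_smul]
  have hC_mem : ∀ p p', C p p' ∈ ZqInv := by
    intro p p'
    have h : A.adjugate = (ZqInv.subtype).mapMatrix (Ahat.adjugate) := by
      rw [RingHom.map_adjugate, hsub]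
    rw [hCdef, h]
    exact (Ahat.adjugate p p').2
  have hchange : ∀ (v : (ιM × ιN) → Fq) (p'' : ιM × ιN),
      bP.repr (∑ p, v p • cb p) p'' = ∑ p, v p * A p p'' := by
    intro v p''
    rw [map_sum]
    simp only [Finsupp.coe_finset_sum, Finset.sum_apply, map_smul, Finsupp.coe_smul,
      Pi.smul_apply, smul_eq_mul]
    rfl
  have swap : ∀ (r : (ιM × ιN) → Fq) (D : Matrix (ιM × ιN) (ιM × ιN) Fq)
      (w : (ιM × ιN) → M ⊗[Fq] N),
      ∑ p, r p • ∑ p', D p p' • w p' = ∑ p', (∑ p, r p * D p p') • w p' := by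
    intro r D w
    simp only [Finset.smul_sum, smul_smul, Finset.sum_smul]
    exact Finset.sum_comm
  have hone : ∀ (w : (ιM × ιN) → M ⊗[Fq] N) (p : ιM × ιN),
      ∑ p'', ((1 : Matrix (ιM × ιN) (ιM × ιN) Fq) p p'') • w p'' = w p := by
    intro w p
    simp [Matrix.one_apply, ite_smul]
  have hrec : ∀ p, bP p = ∑ p', C p p' • cb p' := by
    intro p
    have h2 : ∑ p', C p p' • cb p' = ∑ p'', (∑ p', C p p' * A p' p'') • bP p'' := by
      rw [Finset.sum_congr rfl fun p' (_ : p' ∈ Finset.univ) => by rw [hcb_sum p']]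
      exact swap (fun p' => C p p') A bP
    rw [h2]
    rw [Finset.sum_congr rfl fun p'' (_ : p'' ∈ Finset.univ) => by
      rw [show (∑ p', C p p' * A p' p'') = (1 : Matrix (ιM × ιN) (ιM × ιN) Fq) p p'' by
        rw [← Matrix.mul_apply, hCA]]]
    rw [hone bP p]
  have main : ∀ (S : Subring Fq), (∀ p p', A p p' ∈ S) → (∀ p p', C p p' ∈ S) →
      ∀ x : M ⊗[Fq] N, (∀ p, bP.repr x p ∈ S) ↔
        ∃ c : ιM × ιN →₀ Fq, (∀ p, c p ∈ S) ∧ x = c.sum fun p a => a • cb p := by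
    intro S hAS hCS x
    constructor
    · intro hx
      refine ⟨Finsupp.equivFunOnFinite.symm (fun p => ∑ p', bP.repr x p' * C p' p), ?_, ?_⟩
      · intro p
        simp only [Finsupp.coe_equivFunOnFinite_symm]
        exact Subring.sum_mem _ fun p' _ => mul_mem (hx p') (hCS p' p)
      · rw [Finsupp.sum_fintype _ _ (fun p => by rw [zero_smul])]
        simp only [Finsupp.coe_equivFunOnFinite_symm]
        conv_lhs => rw [← bP.sum_repr x]
        rw [Finset.sum_congr rfl fun p' (_ : p' ∈ Finset.univ) => by rw [hrec p']]
        exact swap (fun p' => bP.repr x p') C cb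
    · rintro ⟨c, hcS, rfl⟩
      intro p
      rw [Finsupp.sum_fintype _ _ (fun p => by rw [zero_smul])]
      rw [hchange (fun p => c p) p]
      exact Subring.sum_mem _ fun p' _ => mul_mem (hcS p') (hAS p' p)
  refine ⟨⟨?_, ?_⟩, ?_, ?_⟩
  · -- linear independence
    rw [Fintype.linearIndependent_iff]
    intro v hv p₀
    have hcoord : ∀ p'', ∑ p, v p * A p p'' = 0 := by
      intro p''
      rw [← hchange v p'', hv, map_zero]
      rfl
    have hv0 : v p₀ = ∑ p'', (∑ p, v p * A p p'') * C p'' p₀ := by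
      calc v p₀ = ∑ p, v p * (1 : Matrix (ιM × ιN) (ιM × ιN) Fq) p p₀ := by
            simp [Matrix.one_apply, mul_ite]
        _ = ∑ p, v p * (∑ p'', A p p'' * C p'' p₀) := by
            refine Finset.sum_congr rfl fun p _ => ?_
            rw [← Matrix.mul_apply, hAC]
        _ = ∑ p, ∑ p'', v p * A p p'' * C p'' p₀ := by
            refine Finset.sum_congr rfl fun p _ => ?_
            rw [Finset.mul_sum]
            exact Finset.sum_congr rfl fun p'' _ => by ring
        _ = ∑ p'', ∑ p, v p * A p p'' * C p'' p₀ := Finset.sum_comm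
        _ = ∑ p'', (∑ p, v p * A p p'') * C p'' p₀ := by
            refine Finset.sum_congr rfl fun p'' _ => ?_
            rw [Finset.sum_mul]
    rw [hv0]
    simp [hcoord]
  · -- spanning
    rw [eq_top_iff, ← bP.span_eq, Submodule.span_le]
    rintro x ⟨p, rfl⟩
    rw [hrec p]
    exact Submodule.sum_mem _ fun p' _ =>
      Submodule.smul_mem _ _ (Submodule.subset_span ⟨p', rfl⟩)
  · exact main LaurentZ (fun p p' => ZqInv_le_LaurentZ (hA_mem p p'))
      (fun p p' => ZqInv_le_LaurentZ (hC_mem p p'))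
  · exact main ZqInv hA_mem hC_mem






end
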